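/- arXiv:2109.06439 — 4 statements merged into one kernel-verified Lean document; each statement's English description precedes it below -/
import Mathlib

section
/- Let (C, w, l, r, d) be homological data of an oriented knot diagram K on Σ_g, and define the reversed data (C, w, l', r', d') by l'(c) = −r(c), r'(c) = −l(c), and d' = −d (the homological data of the diagram r(K) obtained by reversing the orientation of K: all smoothing classes reverse sign and the roles of the two smoothings interchange, while writhes are unchanged). Then for every γ ∈ ℤ^{2g} with ω(γ, d) = 0 one also has ω(γ, d') = 0, the chord indices computed from the reversed data agree with the original ones (f'_γ(c) = f_γ(c) for all c ∈ C), and the writhe polynomials agree: W'^γ = W^γ, i.e. W_{r(K)}^γ(t) = W_K^γ(t). (Proposition 3.2.) -/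
/-- The standard alternating intersection form on `ℤ^{2g} ≅ H₁(Σ_g, ℤ)`. -/
def intersectionForm (g : ℕ) (x y : Fin (2 * g) → ℤ) : ℤ :=
  ∑ i : Fin g,
    (x ⟨2 * i.val, by omega⟩ * y ⟨2 * i.val + 1, by omega⟩
      - x ⟨2 * i.val + 1, by omega⟩ * y ⟨2 * i.val, by omega⟩)

/-- The chord index `f_γ(c) = w(c)·ω(γ, r(c))`. -/
def chordIndex (g : ℕ) {Cr : Type*} (w : Cr → ℤ) (r : Cr → Fin (2 * g) → ℤ)
    (γ : Fin (2 * g) → ℤ) (c : Cr) : ℤ :=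
  w c * intersectionForm g γ (r c)

/-- The writhe polynomial `W^γ = Σ_{c ∈ C, f_γ(c) ≠ 0} w(c)·t^{f_γ(c)} ∈ ℤ[t, t⁻¹]`. -/
noncomputable def writhePoly (g : ℕ) {Cr : Type*} [Fintype Cr] (w : Cr → ℤ)
    (r : Cr → Fin (2 * g) → ℤ) (γ : Fin (2 * g) → ℤ) : LaurentPolynomial ℤ :=
  ∑ c ∈ Finset.univ.filter (fun c => chordIndex g w r γ c ≠ 0),
    LaurentPolynomial.C (w c) * LaurentPolynomial.T (chordIndex g w r γ c)

lemma intersectionForm_neg (g : ℕ) (γ x : Fin (2 * g) → ℤ) :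
    intersectionForm g γ (-x) = -intersectionForm g γ x := by
  unfold intersectionForm
  rw [← Finset.sum_neg_distrib]
  exact Finset.sum_congr rfl fun i _ => by simp; ring

lemma intersectionForm_add (g : ℕ) (γ x y : Fin (2 * g) → ℤ) :
    intersectionForm g γ (x + y) = intersectionForm g γ x + intersectionForm g γ y := by
  unfold intersectionForm
  rw [← Finset.sum_add_distrib]
  exact Finset.sum_congr rfl fun i _ => by simp; ring

/-- Proposition 3.2: the reversed data `(C, w, l', r', d')` of `r(K)`, with
`l'(c) = -r(c)`, `r'(c) = -l(c)` and `d' = -d`, satisfies `ω(γ, d') = 0`, yields the same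
chord indices `f'_γ(c) = f_γ(c)`, and the same writhe polynomial:
`W_{r(K)}^γ(t) = W_K^γ(t)`. -/
theorem writhePoly_reverse (g : ℕ) (Cr : Type*) [Fintype Cr]
    (w : Cr → ℤ) (l r : Cr → Fin (2 * g) → ℤ) (d : Fin (2 * g) → ℤ)
    (hw : ∀ c, w c = 1 ∨ w c = -1)
    (hlr : ∀ c, l c + r c = d)
    (l' r' : Cr → Fin (2 * g) → ℤ) (d' : Fin (2 * g) → ℤ)
    (hl' : ∀ c, l' c = -(r c)) (hr' : ∀ c, r' c = -(l c)) (hd' : d' = -d)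
    (γ : Fin (2 * g) → ℤ) (hγ : intersectionForm g γ d = 0) :
    intersectionForm g γ d' = 0 ∧
    (∀ c : Cr, chordIndex g w r' γ c = chordIndex g w r γ c) ∧
    writhePoly g w r' γ = writhePoly g w r γ := by
  have hci : ∀ c : Cr, chordIndex g w r' γ c = chordIndex g w r γ c := by
    intro c
    have h : intersectionForm g γ (r' c) = intersectionForm g γ (r c) := by
      rw [hr' c, intersectionForm_neg]
      have := congrArg (intersectionForm g γ) (hlr c)
      rw [intersectionForm_add, hγ] at this
      linarith
    unfold chordIndex
    rw [h]
  refine ⟨by rw [hd', intersectionForm_neg, hγ, neg_zero], hci, ?_⟩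
  unfold writhePoly
  apply Finset.sum_congr
  · ext c; simp [hci c]
  · intro c _; rw [hci c]
end

section
/- Let (C, w, l, r, d) be homological data of an oriented knot diagram K on Σ_g and let (C, w, l', r', d') with l'(c) = −r(c), r'(c) = −l(c), d' = −d be the reversed data of r(K). Take γ_K = d and γ_{r(K)} = −d (closed curves representing the classes [K] and [r(K)]; since ω is alternating, ω(d, d) = 0 = ω(−d, −d), so both writhe polynomials are defined). Then the writhe polynomial of the reversed data with respect to −d equals the image of W^d under the ring automorphism of ℤ[t, t⁻¹] sending t to t⁻¹: W'^{−d}(t) = W^d(t⁻¹), i.e. W_{r(K)}^{γ_{r(K)}}(t) = W_K^{γ_K}(t⁻¹). (Corollary 3.3.) -/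
lemma iform_neg_neg (g : ℕ) (x y : Fin (2 * g) → ℤ) :
    intersectionForm g (-x) (-y) = intersectionForm g x y := by
  simp [intersectionForm]

lemma iform_self (g : ℕ) (x : Fin (2 * g) → ℤ) : intersectionForm g x x = 0 := by
  simp [intersectionForm, mul_comm]

lemma iform_add_right (g : ℕ) (x y z : Fin (2 * g) → ℤ) :
    intersectionForm g x (y + z) = intersectionForm g x y + intersectionForm g x z := by
  unfold intersectionForm
  rw [← Finset.sum_add_distrib]
  apply Finset.sum_congr rfl
  intro i _
  simp [Pi.add_apply]; ring

/-- Corollary 3.3: for the reversed data `(C, w, l', r', d')` of `r(K)` (with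
`l'(c) = -r(c)`, `r'(c) = -l(c)`, `d' = -d`), taking the curves `γ_K = d` representing
`[K]` and `γ_{r(K)} = -d = d'` representing `[r(K)]`, one has
`W_{r(K)}^{γ_{r(K)}}(t) = W_K^{γ_K}(t⁻¹)`, where `t ↦ t⁻¹` is the ring automorphism
`LaurentPolynomial.invert`. -/
theorem writhePoly_reverse_self_class (g : ℕ) (Cr : Type*) [Fintype Cr]
    (w : Cr → ℤ) (l r : Cr → Fin (2 * g) → ℤ) (d : Fin (2 * g) → ℤ)
    (hw : ∀ c, w c = 1 ∨ w c = -1)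
    (hlr : ∀ c, l c + r c = d)
    (l' r' : Cr → Fin (2 * g) → ℤ) (d' : Fin (2 * g) → ℤ)
    (hl' : ∀ c, l' c = -(r c)) (hr' : ∀ c, r' c = -(l c)) (hd' : d' = -d) :
    writhePoly g w r' (-d) = LaurentPolynomial.invert (writhePoly g w r d) := by
  have hneg : ∀ c, chordIndex g w r' (-d) c = -(chordIndex g w r d c) := by
    intro c
    have h1 : intersectionForm g (-d) (r' c) = intersectionForm g d (l c) := by
      rw [hr' c, iform_neg_neg]
    have h2 : intersectionForm g d (l c) + intersectionForm g d (r c) = 0 := by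
      rw [← iform_add_right, hlr c, iform_self]
    have h3 : intersectionForm g d (l c) = -(intersectionForm g d (r c)) := by linarith
    simp only [chordIndex, h1, h3]
    ring
  unfold writhePoly
  rw [map_sum]
  apply Finset.sum_congr
  · ext c; simp [hneg c]
  · intro c _
    rw [hneg c]
    simp
end

section
/- Let (C, w, l, r, d) be homological data of an oriented knot diagram K on Σ_g, and define the mirror data (C, w', l, r, d) by w'(c) = −w(c) (the homological data of m(K), obtained by switching all crossings: every writhe reverses sign while the smoothing classes and the class of the diagram are unchanged). Then for every γ ∈ ℤ^{2g} with ω(γ, d) = 0, the writhe polynomial computed from the mirror data satisfies W'^γ = −σ(W^γ), where σ is the ring automorphism of ℤ[t, t⁻¹] sending t to t⁻¹; i.e. W_{m(K)}^γ(t) = −W_K^γ(t⁻¹). (Proposition 3.4.) -/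
/-- Proposition 3.4: for the mirror data `(C, w', l, r, d)` of `m(K)`, obtained by
switching all crossings (`w'(c) = -w(c)`, smoothing classes and `d` unchanged), for every
`γ` with `ω(γ, d) = 0` one has `W_{m(K)}^γ(t) = -W_K^γ(t⁻¹)`, where `t ↦ t⁻¹` is the ring
automorphism `LaurentPolynomial.invert`. -/
theorem writhePoly_mirror (g : ℕ) (Cr : Type*) [Fintype Cr]
    (w : Cr → ℤ) (l r : Cr → Fin (2 * g) → ℤ) (d : Fin (2 * g) → ℤ)
    (hw : ∀ c, w c = 1 ∨ w c = -1)
    (hlr : ∀ c, l c + r c = d)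
    (w' : Cr → ℤ) (hw' : ∀ c, w' c = -(w c))
    (γ : Fin (2 * g) → ℤ) (hγ : intersectionForm g γ d = 0) :
    writhePoly g w' r γ = -(LaurentPolynomial.invert (writhePoly g w r γ)) := by
  have hci : ∀ c, chordIndex g w' r γ c = -chordIndex g w r γ c := by
    intro c; simp [chordIndex, hw' c]
  unfold writhePoly
  rw [map_sum, ← Finset.sum_neg_distrib]
  apply Finset.sum_congr
  · ext c; simp [hci c]
  · intro c _
    rw [hci c]
    simp [map_mul, hw' c, map_neg]
end

section
/- Let (C, w, l, r, d) be homological data of an oriented knot diagram D on Σ_g and let c₁, c₂, c₃ ∈ C be the three crossings involved in a third Reidemeister move. (i) If w(c₁) = w(c₂) = 1, w(c₃) = −1 and r(c₁) + r(c₂) + r(c₃) = d (the relation [D_{c₁}^r] + [D_{c₂}^r] + [D_{c₃}^r] = [D] of the first configuration of Figure 5), then for every γ ∈ ℤ^{2g} with ω(γ, d) = 0 one has f_γ(c₃) = f_γ(c₁) + f_γ(c₂). (ii) If w(c₁) = 1, w(c₂) = −1, w(c₃) = 1 and r(c₁) + d = r(c₂) + r(c₃) (the relation [D_{c₁}^r]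 + [D] = [D_{c₂}^r] + [D_{c₃}^r] of the second configuration), then again f_γ(c₃) = f_γ(c₁) + f_γ(c₂). In particular, in either case the three indices f_γ(c₁), f_γ(c₂), f_γ(c₃) cannot all be odd integers, so no parity derived from H₁(Σ, ℤ₂) makes all three crossings of a third Reidemeister move odd. -/

lemma intersectionForm_add_right (g : ℕ) (x a b : Fin (2 * g) → ℤ) :
    intersectionForm g x (a + b) = intersectionForm g x a + intersectionForm g x b := by
  simp only [intersectionForm, Pi.add_apply, ← Finset.sum_add_distrib]
  exact Finset.sum_congr rfl fun i _ => by ring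

/-- The relation `f_γ(c₃) = f_γ(c₁) + f_γ(c₂)` for the three crossings of a third
Reidemeister move (Section 4, Figure 5): in the first configuration
(`w(c₁) = w(c₂) = 1`, `w(c₃) = -1`, `[D_{c₁}^r] + [D_{c₂}^r] + [D_{c₃}^r] = [D]`) and in
the second configuration (`w(c₁) = 1`, `w(c₂) = -1`, `w(c₃) = 1`,
`[D_{c₁}^r] + [D] = [D_{c₂}^r] + [D_{c₃}^r]`); in particular `f_γ(c₁), f_γ(c₂), f_γ(c₃)`
cannot all be odd, so no homological parity makes all three crossings odd. -/
theorem third_reidemeister_index_relation (g : ℕ) (Cr : Type*) [Fintype Cr]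
    (w : Cr → ℤ) (l r : Cr → Fin (2 * g) → ℤ) (d : Fin (2 * g) → ℤ)
    (hw : ∀ c, w c = 1 ∨ w c = -1)
    (hlr : ∀ c, l c + r c = d)
    (c₁ c₂ c₃ : Cr) :
    ((w c₁ = 1 → w c₂ = 1 → w c₃ = -1 → r c₁ + r c₂ + r c₃ = d →
      ∀ γ : Fin (2 * g) → ℤ, intersectionForm g γ d = 0 →
        chordIndex g w r γ c₃ = chordIndex g w r γ c₁ + chordIndex g w r γ c₂) ∧
     (w c₁ = 1 → w c₂ = -1 → w c₃ = 1 → r c₁ + d = r c₂ + r c₃ →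
      ∀ γ : Fin (2 * g) → ℤ, intersectionForm g γ d = 0 →
        chordIndex g w r γ c₃ = chordIndex g w r γ c₁ + chordIndex g w r γ c₂)) ∧
    (∀ γ : Fin (2 * g) → ℤ, intersectionForm g γ d = 0 →
      chordIndex g w r γ c₃ = chordIndex g w r γ c₁ + chordIndex g w r γ c₂ →
      ¬(Odd (chordIndex g w r γ c₁) ∧ Odd (chordIndex g w r γ c₂) ∧
        Odd (chordIndex g w r γ c₃))) := by
  refine ⟨⟨fun h1 h2 h3 hr γ hγ => ?_, fun h1 h2 h3 hr γ hγ => ?_⟩,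
    fun γ hγ heq ⟨⟨a, ha⟩, ⟨b, hb⟩, ⟨c, hc⟩⟩ => ?_⟩
  · have := congrArg (intersectionForm g γ) hr
    rw [intersectionForm_add_right, intersectionForm_add_right, hγ] at this
    simp only [chordIndex, h1, h2, h3]
    linarith
  · have := congrArg (intersectionForm g γ) hr
    rw [intersectionForm_add_right, intersectionForm_add_right, hγ] at this
    simp only [chordIndex, h1, h2, h3]
    linarith
  · omega
end
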